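/- Let c > 4 and a = √(2c - 4). Then ∫_{-a}^{a} ρ(x) dx = 1, where ρ(x) = (1/(4π))·[arctan((-c(x-4) - 8)/((c-4)·√(2c - 4 - x²))) + arctan((c(x+4) - 8)/((c-4)·√(2c - 4 - x²)))]. -/

import Mathlib

open Real Set MeasureTheory intervalIntegral

private noncomputable def Hf (c a x : ℝ) : ℝ :=
  Real.arcsin ((2*(2*c-4) - c*x)/(a*(c-2*x))) + Real.arcsin ((c*x + 2*(2*c-4))/(a*(2*x+c)))

private noncomputable def Ff (c a x : ℝ) : ℝ :=
  x * Hf c a x - (c-4) * Real.arcsin (x/a)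
    + c * Real.arcsin ((c-4)*x/(a*Real.sqrt (c^2-4*x^2)))

private lemma basic_facts {c a : ℝ} (hc : 4 < c) (ha : a = Real.sqrt (2*c - 4)) :
    a^2 = 2*c-4 ∧ 0 < a ∧ 0 < c - 2*a := by
  have h2c4 : (0:ℝ) < 2*c - 4 := by linarith
  have ha2 : a^2 = 2*c - 4 := by rw [ha]; exact Real.sq_sqrt h2c4.le
  have ha0 : 0 < a := by rw [ha]; exact Real.sqrt_pos.mpr h2c4
  have hD : 0 < c - 4 := by linarith
  have hprod : (c - 2*a)*(c + 2*a) = (c-4)^2 := by linear_combination (-4:ℝ)*ha2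
  have hc2a : 0 < c - 2*a := by nlinarith [pow_pos hD 2, ha0]
  exact ⟨ha2, ha0, hc2a⟩

private lemma arctan_eq_arcsin' {N d e : ℝ} (hd : 0 < d) (he : 0 < e)
    (hsq : d^2 + N^2 = e^2) : Real.arctan (N/d) = Real.arcsin (N/e) := by
  rw [Real.arctan_eq_arcsin]
  congr 1
  have h1 : 1 + (N/d)^2 = (e/d)^2 := by field_simp; linarith
  rw [h1, Real.sqrt_sq (by positivity)]
  field_simp


private lemma sqrt_one_sub_div_sq {N E P : ℝ} (hE : 0 < E) (hP : 0 ≤ P)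
    (h : E^2 = N^2 + P^2) : Real.sqrt (1 - (N/E)^2) = P/E := by
  have h1 : 1 - (N/E)^2 = (P/E)^2 := by
    field_simp
    linarith
  rw [h1, Real.sqrt_sq (by positivity)]

private lemma div_ne_pm_one {N E P : ℝ} (hE : 0 < E) (hP : 0 < P)
    (h : E^2 = N^2 + P^2) : N/E ≠ 1 ∧ N/E ≠ -1 := by
  have h2 : (N/E)^2 < 1 := by
    rw [div_pow, div_lt_one (by positivity)]
    nlinarith
  constructor <;> intro hh <;> rw [hh] at h2 <;> norm_num at h2

private lemma Hf_ends {c a : ℝ} (hc : 4 < c) (ha : a = Real.sqrt (2*c - 4)) :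
    Hf c a a = 0 ∧ Hf c a (-a) = 0 := by
  obtain ⟨ha2, ha0, hc2a⟩ := basic_facts hc ha
  have hne1 : a*(c-2*a) ≠ 0 := by positivity
  have hne2 : a*(2*a+c) ≠ 0 := by positivity
  have hne3 : a*(c-2*(-a)) ≠ 0 := by
    have : (0:ℝ) < c - 2*(-a) := by linarith
    positivity
  have hne4 : a*(2*(-a)+c) ≠ 0 := by
    have : (0:ℝ) < 2*(-a)+c := by linarith
    positivity
  constructor
  · rw [Hf, show (2*(2*c-4) - c*a)/(a*(c-2*a)) = -1 by
        rw [div_eq_iff hne1]; linear_combination (-2:ℝ)*ha2,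
      show (c*a + 2*(2*c-4))/(a*(2*a+c)) = 1 by
        rw [div_eq_iff hne2]; linear_combination (-2:ℝ)*ha2,
      Real.arcsin_one, Real.arcsin_neg_one]
    ring
  · rw [Hf, show (2*(2*c-4) - c*(-a))/(a*(c-2*(-a))) = 1 by
        rw [div_eq_iff hne3]; linear_combination (-2:ℝ)*ha2,
      show (c*(-a) + 2*(2*c-4))/(a*(2*(-a)+c)) = -1 by
        rw [div_eq_iff hne4]; linear_combination (-2:ℝ)*ha2,
      Real.arcsin_one, Real.arcsin_neg_one]
    ring

private lemma Hf_eqOn {c a : ℝ} (hc : 4 < c) (ha : a = Real.sqrt (2*c - 4)) :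
    EqOn (fun x => Real.arctan ((-c*(x-4) - 8)/((c-4) * Real.sqrt (2*c - 4 - x^2)))
          + Real.arctan ((c*(x+4) - 8)/((c-4) * Real.sqrt (2*c - 4 - x^2))))
      (Hf c a) (Icc (-a) a) := by
  obtain ⟨ha2, ha0, hc2a⟩ := basic_facts hc ha
  have hD : (0:ℝ) < c - 4 := by linarith
  intro x hx
  obtain ⟨hx1, hx2⟩ := hx
  simp only
  rcases hx2.lt_or_eq with h2 | h2
  · rcases hx1.lt_or_eq with h1 | h1
    · -- interior
      have hw : (0:ℝ) < 2*c - 4 - x^2 := by nlinarith [mul_pos (show (0:ℝ) < a - x by linarith) (show (0:ℝ) < a + x by linarith)]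
      have hw2 : (Real.sqrt (2*c-4-x^2))^2 = 2*c-4-x^2 := Real.sq_sqrt hw.le
      have hw0 : 0 < Real.sqrt (2*c-4-x^2) := Real.sqrt_pos.mpr hw
      have h2xc : (0:ℝ) < 2*x + c := by linarith
      have hc2x : (0:ℝ) < c - 2*x := by linarith
      have t1 : Real.arctan ((-c*(x-4) - 8)/((c-4) * Real.sqrt (2*c - 4 - x^2)))
          = Real.arcsin ((2*(2*c-4) - c*x)/(a*(c-2*x))) := by
        rw [show -c*(x-4) - 8 = 2*(2*c-4) - c*x by ring]
        exact arctan_eq_arcsin' (by positivity) (by positivity)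
          (by linear_combination (-(c-2*x)^2)*ha2 + (c-4)^2*hw2)
      have t2 : Real.arctan ((c*(x+4) - 8)/((c-4) * Real.sqrt (2*c - 4 - x^2)))
          = Real.arcsin ((c*x + 2*(2*c-4))/(a*(2*x+c))) := by
        rw [show c*(x+4) - 8 = c*x + 2*(2*c-4) by ring]
        exact arctan_eq_arcsin' (by positivity) (by positivity)
          (by linear_combination (-(2*x+c)^2)*ha2 + (c-4)^2*hw2)
      rw [t1, t2, Hf]
    · -- x = -a
      rw [← h1, show 2*c - 4 - (-a)^2 = 0 by linear_combination (-1:ℝ)*ha2,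
        Real.sqrt_zero, mul_zero, div_zero, div_zero, Real.arctan_zero, add_zero]
      exact ((Hf_ends hc ha).2).symm
  · -- x = a
    rw [h2, show 2*c - 4 - a^2 = 0 by linear_combination (-1:ℝ)*ha2,
      Real.sqrt_zero, mul_zero, div_zero, div_zero, Real.arctan_zero, add_zero]
    exact ((Hf_ends hc ha).1).symm

private lemma Hf_contOn {c a : ℝ} (hc : 4 < c) (ha : a = Real.sqrt (2*c - 4)) :
    ContinuousOn (Hf c a) (Icc (-a) a) := by
  obtain ⟨ha2, ha0, hc2a⟩ := basic_facts hc ha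
  apply ContinuousOn.add
  · apply Real.continuous_arcsin.comp_continuousOn
    apply ContinuousOn.div (by fun_prop) (by fun_prop)
    intro x hx
    have : (0:ℝ) < c - 2*x := by linarith [hx.2]
    positivity
  · apply Real.continuous_arcsin.comp_continuousOn
    apply ContinuousOn.div (by fun_prop) (by fun_prop)
    intro x hx
    have : (0:ℝ) < 2*x + c := by linarith [hx.1]
    positivity

private lemma Ff_contOn {c a : ℝ} (hc : 4 < c) (ha : a = Real.sqrt (2*c - 4)) :
    ContinuousOn (Ff c a) (Icc (-a) a) := by
  obtain ⟨ha2, ha0, hc2a⟩ := basic_facts hc ha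
  apply ContinuousOn.add
  · apply ContinuousOn.sub
    · exact continuousOn_id.mul (Hf_contOn hc ha)
    · exact (continuous_const.mul (Real.continuous_arcsin.comp (continuous_id.div_const a))).continuousOn
  · apply ContinuousOn.mul continuousOn_const
    apply Real.continuous_arcsin.comp_continuousOn
    apply ContinuousOn.div (by fun_prop)
    · exact (continuous_const.mul (Real.continuous_sqrt.comp (by fun_prop))).continuousOn
    · intro x hx
      have h1 : (0:ℝ) < c - 2*x := by linarith [hx.2]
      have h2 : (0:ℝ) < 2*x + c := by linarith [hx.1]
      have h3 : (0:ℝ) < c^2 - 4*x^2 := by nlinarith [mul_pos h1 h2]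
      have h4 : 0 < Real.sqrt (c^2 - 4*x^2) := Real.sqrt_pos.mpr h3
      positivity

private lemma Ff_deriv {c a : ℝ} (hc : 4 < c) (ha : a = Real.sqrt (2*c - 4)) :
    ∀ x ∈ Ioo (-a) a, HasDerivAt (Ff c a) (Hf c a x) x := by
  obtain ⟨ha2, ha0, hc2a⟩ := basic_facts hc ha
  have hD : (0:ℝ) < c - 4 := by linarith
  intro x hx
  obtain ⟨hx1, hx2⟩ := hx
  have hwpos : (0:ℝ) < 2*c - 4 - x^2 := by
    nlinarith [mul_pos (show (0:ℝ) < a - x by linarith) (show (0:ℝ) < a + x by linarith)]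
  set w := Real.sqrt (2*c-4-x^2) with hwdef
  have hw2 : w^2 = 2*c-4-x^2 := Real.sq_sqrt hwpos.le
  have hw0 : 0 < w := Real.sqrt_pos.mpr hwpos
  have h2xc : (0:ℝ) < 2*x + c := by linarith
  have hc2x : (0:ℝ) < c - 2*x := by linarith
  have hr3 : (0:ℝ) < c^2 - 4*x^2 := by nlinarith [mul_pos hc2x h2xc]
  set r := Real.sqrt (c^2-4*x^2) with hrdef
  have hr2 : r^2 = c^2-4*x^2 := Real.sq_sqrt hr3.le
  have hr0 : 0 < r := Real.sqrt_pos.mpr hr3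
  -- first arcsin term of Hf
  have hE1 : (0:ℝ) < a*(c-2*x) := by positivity
  have hP0 : (0:ℝ) < (c-4)*w := by positivity
  have hEq1 : (a*(c-2*x))^2 = (2*(2*c-4) - c*x)^2 + ((c-4)*w)^2 := by
    linear_combination (c-2*x)^2*ha2 - (c-4)^2*hw2
  have hs1 := sqrt_one_sub_div_sq hE1 hP0.le hEq1
  obtain ⟨hne1a, hne1b⟩ := div_ne_pm_one hE1 hP0 hEq1
  have hden1 : HasDerivAt (fun y : ℝ => a*(c-2*y)) (a*(-(2*1))) x :=
    (((hasDerivAt_id x).const_mul 2).const_sub c).const_mul a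
  have hnum1 : HasDerivAt (fun y : ℝ => 2*(2*c-4) - c*y) (-(c*1)) x :=
    ((hasDerivAt_id x).const_mul c).const_sub (2*(2*c-4))
  have hdiv1 := hnum1.div hden1 (ne_of_gt hE1)
  have hA1 : HasDerivAt (fun y => Real.arcsin ((2*(2*c-4) - c*y)/(a*(c-2*y))))
      (-((c-4)/(w*(c-2*x)))) x := by
    have h0 := (Real.hasDerivAt_arcsin hne1b hne1a).comp x hdiv1
    refine h0.congr_deriv ?_
    symm
    rw [hs1]
    field_simp
    ring
  -- second arcsin term of Hf
  have hE2 : (0:ℝ) < a*(2*x+c) := by positivity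
  have hEq2 : (a*(2*x+c))^2 = (c*x + 2*(2*c-4))^2 + ((c-4)*w)^2 := by
    linear_combination (2*x+c)^2*ha2 - (c-4)^2*hw2
  have hs2 := sqrt_one_sub_div_sq hE2 hP0.le hEq2
  obtain ⟨hne2a, hne2b⟩ := div_ne_pm_one hE2 hP0 hEq2
  have hden2 : HasDerivAt (fun y : ℝ => a*(2*y+c)) (a*(2*1)) x :=
    (((hasDerivAt_id x).const_mul 2).add_const c).const_mul a
  have hnum2 : HasDerivAt (fun y : ℝ => c*y + 2*(2*c-4)) (c*1) x :=
    ((hasDerivAt_id x).const_mul c).add_const (2*(2*c-4))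
  have hdiv2 := hnum2.div hden2 (ne_of_gt hE2)
  have hA2 : HasDerivAt (fun y => Real.arcsin ((c*y + 2*(2*c-4))/(a*(2*y+c))))
      ((c-4)/(w*(2*x+c))) x := by
    have h0 := (Real.hasDerivAt_arcsin hne2b hne2a).comp x hdiv2
    refine h0.congr_deriv ?_
    symm
    rw [hs2]
    field_simp
    ring
  have hH : HasDerivAt (Hf c a)
      (-((c-4)/(w*(c-2*x))) + (c-4)/(w*(2*x+c))) x := hA1.add hA2
  have hxH : HasDerivAt (fun y => y * Hf c a y)
      (1 * Hf c a x + x * (-((c-4)/(w*(c-2*x))) + (c-4)/(w*(2*x+c)))) x :=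
    (hasDerivAt_id x).mul hH
  -- arcsin (x/a) term
  have hEqa : a^2 = x^2 + w^2 := by linear_combination ha2 - hw2
  have hsa := sqrt_one_sub_div_sq ha0 hw0.le hEqa
  obtain ⟨hnea1, hnea2⟩ := div_ne_pm_one ha0 hw0 hEqa
  have harc : HasDerivAt (fun y => (c-4) * Real.arcsin (y/a)) ((c-4) * (1/w)) x := by
    have hdx : HasDerivAt (fun y : ℝ => y/a) (1/a) x := (hasDerivAt_id x).div_const a
    have h0 := ((Real.hasDerivAt_arcsin hnea2 hnea1).comp x hdx).const_mul (c-4)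
    refine h0.congr_deriv ?_
    symm
    rw [hsa]
    field_simp
  -- third term
  have hEr : (0:ℝ) < a*r := by positivity
  have hPc : (0:ℝ) < c*w := by positivity
  have hEqv : (a*r)^2 = ((c-4)*x)^2 + (c*w)^2 := by
    linear_combination r^2*ha2 + (2*c-4)*hr2 - c^2*hw2
  have hs3 := sqrt_one_sub_div_sq hEr hPc.le hEqv
  obtain ⟨hnev1, hnev2⟩ := div_ne_pm_one hEr hPc hEqv
  have hpoly : HasDerivAt (fun y : ℝ => c^2 - 4*y^2) (-(4*(2*x^1))) x :=
    ((hasDerivAt_pow 2 x).const_mul 4).const_sub (c^2)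
  have hsq : HasDerivAt (fun y : ℝ => Real.sqrt (c^2-4*y^2)) (-(4*x)/r) x := by
    have h0 := (Real.hasDerivAt_sqrt (ne_of_gt hr3)).comp x hpoly
    refine h0.congr_deriv ?_
    symm
    rw [← hrdef]
    field_simp
  have hdenv : HasDerivAt (fun y : ℝ => a * Real.sqrt (c^2-4*y^2)) (a * (-(4*x)/r)) x :=
    hsq.const_mul a
  have hnumv : HasDerivAt (fun y : ℝ => (c-4)*y) ((c-4)*1) x :=
    (hasDerivAt_id x).const_mul (c-4)
  have hdivv := hnumv.div hdenv (by rw [← hrdef]; exact ne_of_gt hEr)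
  have hA3 : HasDerivAt (fun y => c * Real.arcsin ((c-4)*y/(a*Real.sqrt (c^2-4*y^2))))
      (c * ((c-4)*c/(w*(c^2-4*x^2)))) x := by
    have h0 := ((Real.hasDerivAt_arcsin hnev2 hnev1).comp x hdivv).const_mul c
    refine h0.congr_deriv ?_
    symm
    congr 1
    rw [← hrdef, hs3]
    rw [show c^2-4*x^2 = r^2 from hr2.symm]
    field_simp
    linear_combination (-1:ℝ) * hr2
  have htot := (hxH.sub harc).add hA3
  have : HasDerivAt (Ff c a)
      ((1 * Hf c a x + x * (-((c-4)/(w*(c-2*x))) + (c-4)/(w*(2*x+c)))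
        - (c-4) * (1/w)) + c * ((c-4)*c/(w*(c^2-4*x^2)))) x := htot
  convert this using 1
  have hcan : x * (-((c-4)/(w*(c-2*x))) + (c-4)/(w*(2*x+c)))
      - (c-4) * (1/w) + c * ((c-4)*c/(w*(c^2-4*x^2))) = 0 := by
    have : c - x*2 ≠ 0 := by linarith
    have : x*2 + c ≠ 0 := by linarith
    have : c^2 - x^2*4 ≠ 0 := by linarith
    field_simp
    ring
  linarith [hcan]

theorem limit_density_normalized (c : ℝ) (hc : 4 < c) (a : ℝ)
    (ha : a = Real.sqrt (2*c - 4)) :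
    ∫ x in (-a)..a,
        (1/(4*π)) * (Real.arctan ((-c*(x-4) - 8)/((c-4) * Real.sqrt (2*c - 4 - x^2)))
          + Real.arctan ((c*(x+4) - 8)/((c-4) * Real.sqrt (2*c - 4 - x^2))))
      = 1 := by
  obtain ⟨ha2, ha0, hc2a⟩ := basic_facts hc ha
  have hle : -a ≤ a := by linarith
  have hD : 0 < c - 4 := by linarith
  rw [intervalIntegral.integral_const_mul]
  have h1 : (∫ x in (-a)..a,
      (Real.arctan ((-c*(x-4) - 8)/((c-4) * Real.sqrt (2*c - 4 - x^2)))
        + Real.arctan ((c*(x+4) - 8)/((c-4) * Real.sqrt (2*c - 4 - x^2)))))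
      = ∫ x in (-a)..a, Hf c a x := by
    apply intervalIntegral.integral_congr
    rw [uIcc_of_le hle]
    exact Hf_eqOn hc ha
  rw [h1]
  have h2 : (∫ x in (-a)..a, Hf c a x) = Ff c a a - Ff c a (-a) := by
    apply intervalIntegral.integral_eq_sub_of_hasDerivAt_of_le hle
      (Ff_contOn hc ha) (Ff_deriv hc ha)
    exact ((Hf_contOn hc ha).mono (by rw [uIcc_of_le hle])).intervalIntegrable
  rw [h2]
  obtain ⟨he1, he2⟩ := Hf_ends hc ha
  have haa : a / a = 1 := div_self (ne_of_gt ha0)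
  have hra : Real.sqrt (c^2 - 4*a^2) = c - 4 := by
    rw [show c^2 - 4*a^2 = (c-4)^2 by linear_combination (-4:ℝ)*ha2, Real.sqrt_sq hD.le]
  have hv1 : (c-4)*a/(a*Real.sqrt (c^2-4*a^2)) = 1 := by
    rw [hra]; field_simp
  have hv2 : (c-4)*(-a)/(a*Real.sqrt (c^2-4*(-a)^2)) = -1 := by
    rw [show ((-a):ℝ)^2 = a^2 by ring, hra]; field_simp
  have hπ := Real.pi_ne_zero
  rw [Ff, Ff, he1, he2, haa, hv1]
  rw [show (-a)/a = -1 by rw [neg_div, haa], hv2]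
  rw [Real.arcsin_one, Real.arcsin_neg_one]
  field_simp
  ring
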